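/- Let R be a (not necessarily commutative) ring with identity, and let e₁, e₂ ∈ R be orthogonal idempotents with e₁ + e₂ = 1. Let I be a two-sided ideal of R such that e₁Ie₁ and e₂Ie₂ are nil with nilpotency indices r₁ and r₂ respectively (i.e., any product of r₁ elements of e₁Ie₁ is zero, and similarly for e₂Ie₂). Then any product of r₁ + r₂ + 1 elements of I is zero; in particular I is nil. -/

import Mathlib

private lemma blocks_helper {R : Type*} [Ring R] (e : R) (he : e * e = e) :
    ∀ zs : List R, e * (zs.map (fun z => z * e)).prod
      = (zs.map (fun z => e * z * e)).prod * e := by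
  intro zs
  induction zs with
  | nil => simp
  | cons z zs ih =>
    simp only [List.map_cons, List.prod_cons]
    calc e * (z * e * (List.map (fun z => z * e) zs).prod)
        = (e * z * e) * (e * (List.map (fun z => z * e) zs).prod) := by
          rw [← mul_assoc, ← mul_assoc, ← mul_assoc, mul_assoc _ e e, he]
      _ = (e * z * e) * ((List.map (fun z => e * z * e) zs).prod * e) := by rw [ih]
      _ = _ := by rw [← mul_assoc]

private lemma key_aux {R : Type*} [Ring R] (e₁ e₂ : R)
    (hsum : e₁ + e₂ = 1) (I : TwoSidedIdeal R) :
    ∀ (l : List R) (b₁ b₂ : ℕ) (p : R),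
      (∀ m : List R, (∀ x ∈ m, x ∈ I) → m.length = b₁ →
        p * (m.map (fun z => z * e₁)).prod = 0) →
      (∀ m : List R, (∀ x ∈ m, x ∈ I) → m.length = b₂ →
        p * (m.map (fun z => z * e₂)).prod = 0) →
      (∀ x ∈ l, x ∈ I) → l.length + 1 = b₁ + b₂ → p * l.prod = 0 := by
  intro l
  induction l with
  | nil =>
    intro b₁ b₂ p K₁ K₂ _ hlen
    simp only [List.length_nil] at hlen
    have hp : p = 0 := by
      rcases Nat.eq_zero_or_pos b₁ with h | h
      · have := K₁ [] (by simp) (by simp [h]); simpa using this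
      · have hb₂ : b₂ = 0 := by omega
        have := K₂ [] (by simp) (by simp [hb₂]); simpa using this
    simp [hp]
  | cons x l ih =>
    intro b₁ b₂ p K₁ K₂ hmem hlen
    rcases Nat.eq_zero_or_pos b₁ with hb₁ | hb₁
    · have hp : p = 0 := by
        have := K₁ [] (by simp) (by simp [hb₁]); simpa using this
      simp [hp]
    rcases Nat.eq_zero_or_pos b₂ with hb₂ | hb₂
    · have hp : p = 0 := by
        have := K₂ [] (by simp) (by simp [hb₂]); simpa using this
      simp [hp]
    have hxI : x ∈ I := hmem x (List.mem_cons_self (a := x) (l := l))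
    have hmem' : ∀ y ∈ l, y ∈ I := fun y hy => hmem y (List.mem_cons_of_mem x hy)
    -- term 1 : p * (x * e₁) * l.prod = 0
    have T1 : (p * (x * e₁)) * l.prod = 0 := by
      apply ih (b₁ - 1) b₂ (p * (x * e₁))
      · intro m hm hml
        have : p * ((x :: m).map (fun z => z * e₁)).prod = 0 := by
          apply K₁ (x :: m)
          · intro y hy
            rcases List.mem_cons.mp hy with h | h
            · exact h ▸ hxI
            · exact hm y h
          · simp [hml]; omega
        simpa [mul_assoc] using this
      · intro m hm hml
        match m with
        | [] => simp only [List.length_nil] at hml; omega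
        | z :: m' =>
          have : p * (((x * (e₁ * z)) :: m').map (fun z => z * e₂)).prod = 0 := by
            apply K₂
            · intro y hy
              rcases List.mem_cons.mp hy with h | h
              · exact h ▸ I.mul_mem_right _ _ hxI
              · exact hm y (List.mem_cons_of_mem z h)
            · simp only [List.length_cons] at hml ⊢; omega
          simpa [mul_assoc] using this
      · exact hmem'
      · simp only [List.length_cons] at hlen; omega
    -- term 2 : p * (x * e₂) * l.prod = 0
    have T2 : (p * (x * e₂)) * l.prod = 0 := by
      apply ih b₁ (b₂ - 1) (p * (x * e₂))
      · intro m hm hml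
        match m with
        | [] => simp only [List.length_nil] at hml; omega
        | z :: m' =>
          have : p * (((x * (e₂ * z)) :: m').map (fun z => z * e₁)).prod = 0 := by
            apply K₁
            · intro y hy
              rcases List.mem_cons.mp hy with h | h
              · exact h ▸ I.mul_mem_right _ _ hxI
              · exact hm y (List.mem_cons_of_mem z h)
            · simp only [List.length_cons] at hml ⊢; omega
          simpa [mul_assoc] using this
      · intro m hm hml
        have : p * ((x :: m).map (fun z => z * e₂)).prod = 0 := by
          apply K₂ (x :: m)
          · intro y hy
            rcases List.mem_cons.mp hy with h | h
            · exact h ▸ hxI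
            · exact hm y h
          · simp [hml]; omega
        simpa [mul_assoc] using this
      · exact hmem'
      · simp only [List.length_cons] at hlen; omega
    have expand : p * (x :: l).prod
        = (p * (x * e₁)) * l.prod + (p * (x * e₂)) * l.prod := by
      have : x = x * e₁ + x * e₂ := by rw [← mul_add, hsum, mul_one]
      calc p * (x :: l).prod = p * (x * l.prod) := by rw [List.prod_cons]
        _ = p * ((x * e₁ + x * e₂) * l.prod) := by rw [← this]
        _ = _ := by noncomm_ring
    rw [expand, T1, T2, add_zero]

/-- orthogonal idempotents e₁, e₂ with e₁ + e₂ = 1; if e₁Ie₁ and e₂Ie₂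
are nil of index r₁, r₂ (all products of rᵢ elements vanish), then every product of
r₁ + r₂ + 1 elements of the two-sided ideal I vanishes. -/
theorem stmt0 {R : Type*} [Ring R] (e₁ e₂ : R)
    (he₁ : e₁ * e₁ = e₁) (he₂ : e₂ * e₂ = e₂)
    (h12 : e₁ * e₂ = 0) (h21 : e₂ * e₁ = 0) (hsum : e₁ + e₂ = 1)
    (I : TwoSidedIdeal R) (r₁ r₂ : ℕ)
    (hr₁ : ∀ l : List R, (∀ y ∈ l, ∃ x ∈ I, y = e₁ * x * e₁) → l.length = r₁ →
      l.prod = 0)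
    (hr₂ : ∀ l : List R, (∀ y ∈ l, ∃ x ∈ I, y = e₂ * x * e₂) → l.length = r₂ →
      l.prod = 0) :
    ∀ l : List R, (∀ x ∈ l, x ∈ I) → l.length = r₁ + r₂ + 1 → l.prod = 0 := by
  intro l hmem hlen
  have K : ∀ (e : R), e * e = e → ∀ r : ℕ,
      (∀ l : List R, (∀ y ∈ l, ∃ x ∈ I, y = e * x * e) → l.length = r → l.prod = 0) →
      ∀ m : List R, (∀ x ∈ m, x ∈ I) → m.length = r + 1 →
        (1 : R) * (m.map (fun z => z * e)).prod = 0 := by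
    intro e he r hr m hm hml
    match m, hml with
    | z :: zs, hml =>
      have hblocks : (zs.map (fun z => e * z * e)).prod = 0 := by
        apply hr
        · intro y hy
          rcases List.mem_map.mp hy with ⟨w, hw, rfl⟩
          exact ⟨w, hm w (List.mem_cons_of_mem z hw), rfl⟩
        · simpa using hml
      calc (1 : R) * ((z :: zs).map (fun z => z * e)).prod
          = z * (e * (zs.map (fun z => z * e)).prod) := by
            simp [mul_assoc]
        _ = z * ((zs.map (fun z => e * z * e)).prod * e) := by
            rw [blocks_helper e he]
        _ = 0 := by rw [hblocks]; simp
  have := key_aux e₁ e₂ hsum I l (r₁ + 1) (r₂ + 1) 1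
    (K e₁ he₁ r₁ hr₁) (K e₂ he₂ r₂ hr₂) hmem (by omega)
  simpa using this
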